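/- Let $G(z), \Theta(z)$ be formal power series in $z^{-1}$ with coefficients $\{g_t\}, \{\theta_t\}$, $g_0 = \theta_0 = 1$. Define $\mathfrak{D}_{\tau',\tau} = g_{\tau'+\tau} - g_{\tau'+\tau+1} + (g_{\tau-1} - g_\tau)*\theta_{\tau'+\tau+1} + (\theta_\tau - \theta_{\tau-1})*g_{\tau'+\tau+1} + g_\tau * (\theta_{\tau'+\tau} - \delta_{\tau',0}\theta_\tau) - \theta_\tau * (g_{\tau'+\tau} - \delta_{\tau',0}g_\tau)$, where $*$ is the convolution $a_{\tau+i}*b_{\tau+j} = \sum_{s=0}^{\tau}a_{s+i}b_{\tau-s+j}$ and negative-index terms are zero. Then the two-variable generating function $\sum_{\tau',\tau\ge0}\mathfrak{D}_{\tau',\tau} y^{-\tau'}z^{-\tau}$ equals $(y^{-1}+z^{-1}-1)[G(z)\Delta_\Theta(y,z) - \Theta(z)\Delta_G(y,z)] + \Delta_{G_1}(y,z) - \Delta_G(y,z)$, where $G_1(z) = z^{-1}G(z)$ and $\Delta_F(y,z) = (F(y)-F(z))/(y^{-1}-z^{-1})$. -/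

import Mathlib

open PowerSeries Finset

private def mco (g θ : ℕ → ℝ) (τ' τ : ℕ) : ℝ :=
  ∑ s ∈ Finset.range (τ + 1), (g s * θ (τ' + τ - s + 1) - θ s * g (τ' + τ - s + 1))

private lemma shift_sum (h k : ℕ → ℝ) (n : ℕ) :
    ∑ s ∈ Finset.range (n + 1), (if s = 0 then (0:ℝ) else h (s - 1)) * k s
      = ∑ i ∈ Finset.range n, h i * k (i + 1) := by
  rw [Finset.sum_range_succ']
  simp

private lemma key (g θ : ℕ → ℝ) (hg0 : g 0 = 1) (hθ0 : θ 0 = 1) (τ' τ : ℕ) :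
    (g (τ' + τ) - g (τ' + τ + 1))
        + ∑ s ∈ Finset.range (τ + 1),
            ((if s = 0 then 0 else g (s - 1)) - g s) * θ (τ' + τ - s + 1)
        + ∑ s ∈ Finset.range (τ + 1),
            (θ s - (if s = 0 then 0 else θ (s - 1))) * g (τ' + τ - s + 1)
        + ∑ s ∈ Finset.range (τ + 1),
            g s * (θ (τ' + τ - s) - (if τ' = 0 then 1 else 0) * θ (τ - s))
        - ∑ s ∈ Finset.range (τ + 1),
            θ s * (g (τ' + τ - s) - (if τ' = 0 then 1 else 0) * g (τ - s))
      = ((if τ' = 0 then 0 else mco g θ (τ' - 1) τ)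
          + (if τ = 0 then 0 else mco g θ τ' (τ - 1))
          - mco g θ τ' τ)
        + (g (τ' + τ) - g (τ' + τ + 1)) := by
  -- Sums 2+3 combine to  mco τ' (τ-1) - mco τ' τ ; sums 4-5 give [τ'≠0] mco (τ'-1) τ.
  have h23 : ∑ s ∈ Finset.range (τ + 1),
            ((if s = 0 then 0 else g (s - 1)) - g s) * θ (τ' + τ - s + 1)
        + ∑ s ∈ Finset.range (τ + 1),
            (θ s - (if s = 0 then 0 else θ (s - 1))) * g (τ' + τ - s + 1)
      = (if τ = 0 then 0 else mco g θ τ' (τ - 1)) - mco g θ τ' τ := by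
    simp only [sub_mul, Finset.sum_sub_distrib]
    rw [shift_sum (fun i => g i) (fun s => θ (τ' + τ - s + 1)),
        shift_sum (fun i => θ i) (fun s => g (τ' + τ - s + 1))]
    unfold mco
    rcases τ with _ | b
    · simp [sub_eq_neg_add]
    · simp only [Nat.succ_ne_zero, if_false, Nat.succ_sub_one, Finset.sum_sub_distrib]
      have e1 : ∀ i ∈ Finset.range (b + 1),
          g i * θ (τ' + (b+1) - (i+1) + 1) = g i * θ (τ' + b - i + 1) := by
        intro i hi
        simp only [Finset.mem_range] at hi
        congr 2
        omega
      have e2 : ∀ i ∈ Finset.range (b + 1),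
          θ i * g (τ' + (b+1) - (i+1) + 1) = θ i * g (τ' + b - i + 1) := by
        intro i hi
        simp only [Finset.mem_range] at hi
        congr 2
        omega
      rw [Finset.sum_congr rfl e1, Finset.sum_congr rfl e2]
      abel
  have h45 : ∑ s ∈ Finset.range (τ + 1),
            g s * (θ (τ' + τ - s) - (if τ' = 0 then 1 else 0) * θ (τ - s))
        - ∑ s ∈ Finset.range (τ + 1),
            θ s * (g (τ' + τ - s) - (if τ' = 0 then 1 else 0) * g (τ - s))
      = (if τ' = 0 then 0 else mco g θ (τ' - 1) τ) := by
    rcases τ' with _ | a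
    · simp
    · simp only [Nat.succ_ne_zero, if_false, Nat.succ_sub_one, zero_mul, sub_zero]
      unfold mco
      rw [Finset.sum_sub_distrib]
      have e1 : ∀ s ∈ Finset.range (τ + 1),
          g s * θ (a + τ - s + 1) = g s * θ (a + 1 + τ - s) := by
        intro s hs
        simp only [Finset.mem_range] at hs
        congr 2
        omega
      have e2 : ∀ s ∈ Finset.range (τ + 1),
          θ s * g (a + τ - s + 1) = θ s * g (a + 1 + τ - s) := by
        intro s hs
        simp only [Finset.mem_range] at hs
        congr 2
        omega
      rw [Finset.sum_congr rfl e1, Finset.sum_congr rfl e2]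
  rw [add_assoc (g (τ' + τ) - g (τ' + τ + 1)), sub_eq_add_neg _ (∑ s ∈ Finset.range (τ + 1),
            θ s * (g (τ' + τ - s) - (if τ' = 0 then 1 else 0) * g (τ - s))), add_assoc, add_assoc,
     ← sub_eq_add_neg, h45]
  rw [h23]
  ring

/-- The two-variable generating function `∑_{τ',τ≥0} 𝔇_{τ',τ} y^{-τ'} z^{-τ}` of the array
`𝔇_{τ',τ} = g_{τ'+τ} - g_{τ'+τ+1} + (g_{τ-1}-g_τ)*θ_{τ'+τ+1} + (θ_τ-θ_{τ-1})*g_{τ'+τ+1}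
+ g_τ*(θ_{τ'+τ} - δ_{τ',0}θ_τ) - θ_τ*(g_{τ'+τ} - δ_{τ',0}g_τ)` (convolutions `*` over `τ`,
negative indices giving `0`) equals
`(y⁻¹+z⁻¹-1)[G(z)Δ_Θ(y,z) - Θ(z)Δ_G(y,z)] + Δ_{G₁}(y,z) - Δ_G(y,z)`,
working in `ℝ[[y⁻¹]][[z⁻¹]]`, where `Δ_F(y,z) = ∑ f_{t'+t+1} y^{-t'} z^{-t}` is the divided
difference and `G₁(z) = z⁻¹G(z)` (so `Δ_{G₁}` has coefficients `g_{t'+t}`). -/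
theorem onsager_generating_function (g θ : ℕ → ℝ) (hg0 : g 0 = 1) (hθ0 : θ 0 = 1) :
    PowerSeries.mk (fun τ' => PowerSeries.mk fun τ =>
        (g (τ' + τ) - g (τ' + τ + 1))
        + ∑ s ∈ Finset.range (τ + 1),
            ((if s = 0 then 0 else g (s - 1)) - g s) * θ (τ' + τ - s + 1)
        + ∑ s ∈ Finset.range (τ + 1),
            (θ s - (if s = 0 then 0 else θ (s - 1))) * g (τ' + τ - s + 1)
        + ∑ s ∈ Finset.range (τ + 1),
            g s * (θ (τ' + τ - s) - (if τ' = 0 then 1 else 0) * θ (τ - s))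
        - ∑ s ∈ Finset.range (τ + 1),
            θ s * (g (τ' + τ - s) - (if τ' = 0 then 1 else 0) * g (τ - s))) =
      (PowerSeries.X + PowerSeries.C (R := PowerSeries ℝ) PowerSeries.X - 1) *
          (PowerSeries.C (R := PowerSeries ℝ) (PowerSeries.mk g) *
              PowerSeries.mk (fun t' => PowerSeries.mk fun t => θ (t' + t + 1)) -
            PowerSeries.C (R := PowerSeries ℝ) (PowerSeries.mk θ) *
              PowerSeries.mk (fun t' => PowerSeries.mk fun t => g (t' + t + 1)))
        + PowerSeries.mk (fun t' => PowerSeries.mk fun t => g (t' + t))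
        - PowerSeries.mk (fun t' => PowerSeries.mk fun t => g (t' + t + 1)) := by
  set M : PowerSeries (PowerSeries ℝ) :=
      (PowerSeries.C (R := PowerSeries ℝ) (PowerSeries.mk g) *
          PowerSeries.mk (fun t' => PowerSeries.mk fun t => θ (t' + t + 1)) -
        PowerSeries.C (R := PowerSeries ℝ) (PowerSeries.mk θ) *
          PowerSeries.mk (fun t' => PowerSeries.mk fun t => g (t' + t + 1))) with hMdef
  have hM : ∀ τ' τ : ℕ, PowerSeries.coeff τ (PowerSeries.coeff τ' M)
      = mco g θ τ' τ := by
    intro τ' τ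
    rw [hMdef]
    simp only [map_sub, PowerSeries.coeff_C_mul, PowerSeries.coeff_mk]
    rw [PowerSeries.coeff_mul, PowerSeries.coeff_mul,
        Finset.Nat.sum_antidiagonal_eq_sum_range_succ_mk,
        Finset.Nat.sum_antidiagonal_eq_sum_range_succ_mk]
    simp only [PowerSeries.coeff_mk]
    unfold mco
    rw [← Finset.sum_sub_distrib]
    refine Finset.sum_congr rfl fun s hs => ?_
    simp only [Finset.mem_range] at hs
    have h1 : τ' + (τ - s) + 1 = τ' + τ - s + 1 := by omega
    rw [h1]
  ext τ' τ
  rw [sub_mul, add_mul, one_mul]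
  simp only [map_sub, map_add, PowerSeries.coeff_mk]
  rw [key g θ hg0 hθ0 τ' τ]
  have hXM : PowerSeries.coeff τ (PowerSeries.coeff τ' (PowerSeries.X * M))
      = (if τ' = 0 then 0 else mco g θ (τ' - 1) τ) := by
    rcases τ' with _ | a
    · simp [PowerSeries.coeff_zero_eq_constantCoeff]
    · rw [PowerSeries.coeff_succ_X_mul]
      simp [hM]
  have hCXM : PowerSeries.coeff τ
      (PowerSeries.coeff τ' (PowerSeries.C (R := PowerSeries ℝ) PowerSeries.X * M))
      = (if τ = 0 then 0 else mco g θ τ' (τ - 1)) := by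
    rw [PowerSeries.coeff_C_mul]
    rcases τ with _ | b
    · simp [PowerSeries.coeff_zero_eq_constantCoeff]
    · rw [PowerSeries.coeff_succ_X_mul]
      simp [hM]
  rw [hXM, hCXM, hM]
  ring
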